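/- Let G be a group generated by elements a_1,…,a_m (m ≥ 2) which is δ-hyperbolic. Let ℓ and a be integers with 1 ≤ a ≤ ℓ, and suppose |B_ℓ| ≥ 2|B_{ℓ−a+2δ}|. Then |B_{2ℓ}| ≥ (|B_ℓ| − 2|B_{ℓ−a+2δ}|)² / |B_{6a+2δ}|. -/
import Mathlib


open Filter Set

namespace GrowthRQ

variable {G : Type*} [Group G] {m : ℕ}

/-- Word norm with respect to the generators `gen i` and their inverses. -/
noncomputable def wordNorm (gen : Fin m → G) (x : G) : ℕ :=
  sInf {n | ∃ w : List (Fin m × Bool), w.length = n ∧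
    (w.map (fun p => if p.2 then gen p.1 else (gen p.1)⁻¹)).prod = x}

/-- Ball of (real) radius `r` for the word norm. -/
def ball (gen : Fin m → G) (r : ℝ) : Set G := {x | (wordNorm gen x : ℝ) ≤ r}

/-- Annulus of elements of norm in `(ℓ - a, ℓ]`. -/
def ann (gen : Fin m → G) (ℓ a : ℝ) : Set G := ball gen ℓ \ ball gen (ℓ - a)

/-- Growth exponent in base `2m-1`. (The limit exists by submultiplicativity,
so it equals the `limsup`.) -/
noncomputable def growthExponent (gen : Fin m → G) : ℝ :=
  Filter.limsup (fun L : ℕ => Real.logb (2 * (m : ℝ) - 1) ((ball gen L).ncard) / L) Filter.atTop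

/-- Gromov product with origin `e`. -/
noncomputable def gromov (gen : Fin m → G) (x y : G) : ℝ :=
  ((wordNorm gen x : ℝ) + (wordNorm gen y : ℝ) - (wordNorm gen (x⁻¹ * y) : ℝ)) / 2

/-- `δ`-hyperbolicity via the Gromov product. -/
def IsHyperbolic (gen : Fin m → G) (δ : ℝ) : Prop :=
  ∀ x y z : G, gromov gen x z ≥ min (gromov gen x y) (gromov gen y z) - δ

/-- Non-elementary: not virtually cyclic. -/
def NonElementary (G : Type*) [Group G] : Prop :=
  ¬ ∃ H : Subgroup G, H.index ≠ 0 ∧ IsCyclic H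

/-- Probability, for `N` independent uniform choices of relators in the ball of radius `ℓ`,
that the chosen tuple satisfies `P`. -/
noncomputable def quotProb (gen : Fin m → G) (ℓ N : ℕ) (P : (Fin N → G) → Prop) : ℝ :=
  (({r : Fin N → G | (∀ i, r i ∈ ball gen (ℓ : ℝ)) ∧ P r}).ncard : ℝ) /
  (({r : Fin N → G | ∀ i, r i ∈ ball gen (ℓ : ℝ)}).ncard : ℝ)

/-- Images of the generators in the quotient by the normal closure of the relators. -/
noncomputable def quotGen (gen : Fin m → G) {N : ℕ} (r : Fin N → G) :
    Fin m → G ⧸ Subgroup.normalClosure (Set.range r) :=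
  fun i => QuotientGroup.mk (gen i)


/-- Evaluation of a word. -/
def evalW (gen : Fin m → G) (w : List (Fin m × Bool)) : G :=
  (w.map (fun p => if p.2 then gen p.1 else (gen p.1)⁻¹)).prod

lemma wordNorm_eq (gen : Fin m → G) (x : G) :
    wordNorm gen x = sInf {n | ∃ w : List (Fin m × Bool), w.length = n ∧ evalW gen w = x} := rfl

lemma evalW_nil (gen : Fin m → G) : evalW gen [] = 1 := rfl

lemma evalW_append (gen : Fin m → G) (w₁ w₂ : List (Fin m × Bool)) :
    evalW gen (w₁ ++ w₂) = evalW gen w₁ * evalW gen w₂ := by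
  simp [evalW]

lemma evalW_flip (gen : Fin m → G) (w : List (Fin m × Bool)) :
    evalW gen ((w.map fun p => (p.1, !p.2)).reverse) = (evalW gen w)⁻¹ := by
  induction w with
  | nil => simp [evalW]
  | cons p t ih =>
      have : evalW gen (p :: t) = evalW gen [p] * evalW gen t := by
        simpa using evalW_append gen [p] t
      simp only [List.map_cons, List.reverse_cons, this]
      rw [evalW_append, ih]
      rcases p with ⟨i, b⟩
      cases b <;> simp [evalW]

lemma exists_word (gen : Fin m → G) (hgen : Subgroup.closure (Set.range gen) = ⊤) (x : G) :
    ∃ w : List (Fin m × Bool), evalW gen w = x := by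
  have hx : x ∈ Subgroup.closure (Set.range gen) := by rw [hgen]; exact Subgroup.mem_top x
  refine Subgroup.closure_induction ?_ ?_ ?_ ?_ hx
  · rintro g ⟨i, rfl⟩
    exact ⟨[(i, true)], by simp [evalW]⟩
  · exact ⟨[], rfl⟩
  · rintro x y _ _ ⟨w₁, h₁⟩ ⟨w₂, h₂⟩
    exact ⟨w₁ ++ w₂, by rw [evalW_append, h₁, h₂]⟩
  · rintro x _ ⟨w, h⟩
    exact ⟨(w.map fun p => (p.1, !p.2)).reverse, by rw [evalW_flip, h]⟩

lemma wordNorm_le (gen : Fin m → G) {w : List (Fin m × Bool)} {x : G} (h : evalW gen w = x) :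
    wordNorm gen x ≤ w.length := Nat.sInf_le ⟨w, rfl, h⟩

lemma exists_min_word (gen : Fin m → G) (hgen : Subgroup.closure (Set.range gen) = ⊤) (x : G) :
    ∃ w : List (Fin m × Bool), w.length = wordNorm gen x ∧ evalW gen w = x := by
  have hne : {n | ∃ w : List (Fin m × Bool), w.length = n ∧ evalW gen w = x}.Nonempty := by
    obtain ⟨w, hw⟩ := exists_word gen hgen x
    exact ⟨w.length, w, rfl, hw⟩
  exact Nat.sInf_mem hne

lemma wordNorm_one (gen : Fin m → G) : wordNorm gen 1 = 0 :=
  Nat.le_zero.mp (wordNorm_le gen (evalW_nil gen))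

lemma wordNorm_mul_le (gen : Fin m → G) (hgen : Subgroup.closure (Set.range gen) = ⊤) (x y : G) :
    wordNorm gen (x * y) ≤ wordNorm gen x + wordNorm gen y := by
  obtain ⟨w₁, hl₁, he₁⟩ := exists_min_word gen hgen x
  obtain ⟨w₂, hl₂, he₂⟩ := exists_min_word gen hgen y
  have := wordNorm_le gen (x := x * y) (w := w₁ ++ w₂)
    (by rw [evalW_append, he₁, he₂])
  simpa [hl₁, hl₂] using this

lemma wordNorm_inv (gen : Fin m → G) (hgen : Subgroup.closure (Set.range gen) = ⊤) (x : G) :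
    wordNorm gen x⁻¹ = wordNorm gen x := by
  have key : ∀ z : G, wordNorm gen z⁻¹ ≤ wordNorm gen z := by
    intro z
    obtain ⟨w, hl, he⟩ := exists_min_word gen hgen z
    have := wordNorm_le gen (x := z⁻¹) (w := (w.map fun p => (p.1, !p.2)).reverse)
      (by rw [evalW_flip, he])
    simpa [hl] using this
  exact le_antisymm (key x) (by simpa using key x⁻¹)

lemma ball_mono (gen : Fin m → G) {r r' : ℝ} (h : r ≤ r') : ball gen r ⊆ ball gen r' :=
  fun x hx => le_trans hx h

lemma ball_finite (gen : Fin m → G) (hgen : Subgroup.closure (Set.range gen) = ⊤) (r : ℝ) :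
    (ball gen r).Finite := by
  rcases le_or_gt 0 r with hr | hr
  · have hsub : ball gen r ⊆ evalW gen '' {w : List (Fin m × Bool) | w.length ≤ ⌊r⌋₊} := by
      intro x hx
      obtain ⟨w, hl, he⟩ := exists_min_word gen hgen x
      refine ⟨w, ?_, he⟩
      have : (wordNorm gen x : ℝ) ≤ r := hx
      have := Nat.le_floor this
      simpa [hl] using this
    exact ((List.finite_length_le (Fin m × Bool) ⌊r⌋₊).image _).subset hsub
  · have : ball gen r = ∅ := by
      ext x
      simp only [ball, mem_setOf_eq, mem_empty_iff_false, iff_false, not_le]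
      exact lt_of_lt_of_le hr (Nat.cast_nonneg _)
    rw [this]; exact finite_empty

lemma one_mem_ball (gen : Fin m → G) {r : ℝ} (hr : 0 ≤ r) : (1 : G) ∈ ball gen r := by
  simp [ball, wordNorm_one, hr]

/-- Geodesic prefix of length `a`. -/
lemma exists_prefix (gen : Fin m → G) (hgen : Subgroup.closure (Set.range gen) = ⊤)
    {x : G} {a : ℕ} (hax : a ≤ wordNorm gen x) :
    ∃ p : G, wordNorm gen p = a ∧ wordNorm gen (p⁻¹ * x) + a ≤ wordNorm gen x := by
  obtain ⟨w, hl, he⟩ := exists_min_word gen hgen x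
  refine ⟨evalW gen (w.take a), ?_, ?_⟩
  · have h1 : wordNorm gen (evalW gen (w.take a)) ≤ a := by
      have := wordNorm_le gen (rfl : evalW gen (w.take a) = _)
      simp only [List.length_take] at this
      exact this.trans (min_le_left _ _)
    have hsplit : evalW gen (w.take a) * evalW gen (w.drop a) = x := by
      rw [← evalW_append, List.take_append_drop, he]
    have h2 : wordNorm gen ((evalW gen (w.take a))⁻¹ * x) ≤ wordNorm gen x - a := by
      have : (evalW gen (w.take a))⁻¹ * x = evalW gen (w.drop a) := by
        rw [← hsplit]; group
      rw [this]
      have := wordNorm_le gen (rfl : evalW gen (w.drop a) = _)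
      simp only [List.length_drop, hl] at this
      exact this
    have h3 : wordNorm gen x ≤ wordNorm gen (evalW gen (w.take a)) +
        wordNorm gen ((evalW gen (w.take a))⁻¹ * x) := by
      have := wordNorm_mul_le gen hgen (evalW gen (w.take a)) ((evalW gen (w.take a))⁻¹ * x)
      simpa using this
    omega
  · have hsplit : evalW gen (w.take a) * evalW gen (w.drop a) = x := by
      rw [← evalW_append, List.take_append_drop, he]
    have : (evalW gen (w.take a))⁻¹ * x = evalW gen (w.drop a) := by
      rw [← hsplit]; group
    rw [this]
    have := wordNorm_le gen (rfl : evalW gen (w.drop a) = _)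
    simp only [List.length_drop, hl] at this
    omega

lemma ncard_sprod {α β : Type*} (s : Set α) (t : Set β) :
    (s ×ˢ t).ncard = s.ncard * t.ncard := by
  rw [← Nat.card_coe_set_eq, ← Nat.card_coe_set_eq, ← Nat.card_coe_set_eq,
    Nat.card_congr (Equiv.Set.prod s t), Nat.card_prod]

/-- norm difference from gromov product. -/
lemma gromov_norm (gen : Fin m → G) (x y : G) :
    (wordNorm gen (x⁻¹ * y) : ℝ) = (wordNorm gen x : ℝ) + (wordNorm gen y : ℝ)
      - 2 * gromov gen x y := by
  simp only [gromov]; ring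


/-- almost supermultiplicativity: in a `δ`-hyperbolic group, for
`1 ≤ a ≤ ℓ` with `|B_ℓ| ≥ 2|B_{ℓ-a+2δ}|`, one has
`|B_{2ℓ}| ≥ (|B_ℓ| - 2|B_{ℓ-a+2δ}|)² / |B_{6a+2δ}|`. -/
theorem statement11 {G : Type*} [Group G] {m : ℕ} (hm : 2 ≤ m) (gen : Fin m → G)
    (hgen : Subgroup.closure (Set.range gen) = ⊤)
    (δ : ℝ) (hδ : 0 ≤ δ) (hhyp : IsHyperbolic gen δ)
    (ℓ a : ℕ) (ha1 : 1 ≤ a) (ha : a ≤ ℓ)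
    (hbig : ((ball gen (ℓ : ℝ)).ncard : ℝ) ≥ 2 * ((ball gen ((ℓ : ℝ) - a + 2 * δ)).ncard : ℝ)) :
    ((ball gen (2 * (ℓ : ℝ))).ncard : ℝ) ≥
      (((ball gen (ℓ : ℝ)).ncard : ℝ) - 2 * ((ball gen ((ℓ : ℝ) - a + 2 * δ)).ncard : ℝ)) ^ 2 /
        ((ball gen (6 * (a : ℝ) + 2 * δ)).ncard : ℝ) := by
  classical
  have ha1' : (1 : ℝ) ≤ (a : ℝ) := by exact_mod_cast ha1
  have ha' : (a : ℝ) ≤ (ℓ : ℝ) := by exact_mod_cast ha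
  set Bl := ball gen (ℓ : ℝ) with hBldef
  set Bd := ball gen ((ℓ : ℝ) - a + 2 * δ) with hBddef
  set BK := ball gen (6 * (a : ℝ) + 2 * δ) with hBKdef
  set BT := ball gen (2 * (ℓ : ℝ)) with hBTdef
  have hBlfin : Bl.Finite := ball_finite gen hgen _
  have hBdfin : Bd.Finite := ball_finite gen hgen _
  have hBKfin : BK.Finite := ball_finite gen hgen _
  have hBTfin : BT.Finite := ball_finite gen hgen _
  have hKpos : (0 : ℝ) < (BK.ncard : ℝ) := by
    have h1 : (1 : G) ∈ BK := one_mem_ball gen (by positivity)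
    exact_mod_cast (Set.ncard_pos hBKfin).mpr ⟨1, h1⟩
  rw [ge_iff_le, div_le_iff₀ hKpos]
  have hB2D : (0 : ℝ) ≤ (Bl.ncard : ℝ) - 2 * (Bd.ncard : ℝ) := by linarith
  by_cases hcase : (ℓ : ℝ) ≤ 3 * a + δ
  · -- trivial case : 2ℓ ≤ 6a + 2δ
    have hsub1 : BT ⊆ BK := ball_mono gen (by linarith)
    have hTK : (BT.ncard : ℝ) ≤ (BK.ncard : ℝ) := by
      exact_mod_cast Set.ncard_le_ncard hsub1 hBKfin
    have hBT : (Bl.ncard : ℝ) ≤ (BT.ncard : ℝ) := by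
      have : Bl ⊆ BT := ball_mono gen (by linarith)
      exact_mod_cast Set.ncard_le_ncard this hBTfin
    have hD0 : (0 : ℝ) ≤ (Bd.ncard : ℝ) := Nat.cast_nonneg _
    have hT0 : (0 : ℝ) ≤ (BT.ncard : ℝ) := Nat.cast_nonneg _
    calc ((Bl.ncard : ℝ) - 2 * (Bd.ncard : ℝ)) ^ 2
        = ((Bl.ncard : ℝ) - 2 * (Bd.ncard : ℝ)) * ((Bl.ncard : ℝ) - 2 * (Bd.ncard : ℝ)) := sq _
      _ ≤ (BT.ncard : ℝ) * (BK.ncard : ℝ) :=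
          mul_le_mul (by linarith) (by linarith) hB2D hT0
  · -- main case
    push_neg at hcase
    set S : Set G := Bl \ ball gen ((ℓ : ℝ) - a) with hSdef
    have hSfin : S.Finite := hBlfin.subset diff_subset
    have hSmem : ∀ x ∈ S, (ℓ : ℝ) - a < (wordNorm gen x : ℝ) ∧ (wordNorm gen x : ℝ) ≤ ℓ := by
      intro x hx
      exact ⟨not_le.mp hx.2, hx.1⟩
    have haS : ∀ x ∈ S, a ≤ wordNorm gen x := by
      intro x hx
      have h1 := (hSmem x hx).1
      have : (a : ℝ) < (wordNorm gen x : ℝ) := by linarith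
      exact_mod_cast this.le
    -- geodesic prefix choice
    have hpre : ∀ x : G, ∃ p : G, x ∈ S →
        wordNorm gen p = a ∧ wordNorm gen (p⁻¹ * x⁻¹) + a ≤ wordNorm gen x⁻¹ := by
      intro x
      by_cases hx : x ∈ S
      · obtain ⟨p, h1, h2⟩ := exists_prefix gen hgen (x := x⁻¹) (a := a)
          (by rw [wordNorm_inv gen hgen]; exact haS x hx)
        exact ⟨p, fun _ => ⟨h1, h2⟩⟩
      · exact ⟨1, fun h => absurd h hx⟩
    choose px hpx using hpre
    set P : Set (G × G) := {p ∈ S ×ˢ S | 2 * (ℓ : ℝ) - 4 * a ≤ (wordNorm gen (p.1 * p.2) : ℝ)}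
      with hPdef
    set Bad : Set (G × G) := (S ×ˢ S) \ P with hBaddef
    -- (1) bad pairs map into S ×ˢ Bd
    have hbadmem : ∀ p ∈ Bad, (px p.1)⁻¹ * p.2 ∈ Bd := by
      rintro ⟨x, y⟩ hp
      have hx : x ∈ S := hp.1.1
      have hy : y ∈ S := hp.1.2
      have hng : (wordNorm gen (x * y) : ℝ) < 2 * (ℓ : ℝ) - 4 * a := by
        by_contra h
        exact hp.2 ⟨hp.1, not_lt.mp h⟩
      obtain ⟨hp1, hp2⟩ := hpx x hx
      have hxinv : (wordNorm gen x⁻¹ : ℝ) = (wordNorm gen x : ℝ) := by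
        rw [wordNorm_inv gen hgen]
      have hx1 := (hSmem x hx).1; have hx2 := (hSmem x hx).2
      have hy1 := (hSmem y hy).1; have hy2 := (hSmem y hy).2
      have hp2' : (wordNorm gen ((px x)⁻¹ * x⁻¹) : ℝ) + a ≤ (wordNorm gen x⁻¹ : ℝ) := by
        exact_mod_cast hp2
      have hp1' : (wordNorm gen (px x) : ℝ) = a := by exact_mod_cast hp1
      have g1 : (a : ℝ) ≤ gromov gen (px x) x⁻¹ := by
        simp only [gromov]
        linarith
      have g2 : (a : ℝ) ≤ gromov gen x⁻¹ y := by
        simp only [gromov, inv_inv]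
        linarith
      have g3 := hhyp (px x) x⁻¹ y
      have gmin : (a : ℝ) ≤ min (gromov gen (px x) x⁻¹) (gromov gen x⁻¹ y) := le_min g1 g2
      have g4 : (a : ℝ) - δ ≤ gromov gen (px x) y := by
        have := g3
        linarith [ge_iff_le.mp g3]
      have hnorm := gromov_norm gen (px x) y
      show (wordNorm gen ((px x)⁻¹ * y) : ℝ) ≤ (ℓ : ℝ) - a + 2 * δ
      rw [hnorm, hp1']
      linarith
    -- (2) Bad cardinality
    have hBadcard : Bad.ncard ≤ S.ncard * Bd.ncard := by
      have := Set.ncard_le_ncard_of_injOn (fun p : G × G => (p.1, (px p.1)⁻¹ * p.2))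
        (fun p hp => Set.mk_mem_prod (hp.1.1) (hbadmem p hp))
        (by
          rintro ⟨x, y⟩ _ ⟨x', y'⟩ _ heq
          obtain ⟨h1, h2⟩ := Prod.mk.injEq .. ▸ heq
          subst h1
          exact Prod.ext rfl (mul_left_cancel h2))
        (hSfin.prod hBdfin)
      rwa [ncard_sprod] at this
    -- (3) section for good pairs
    have hcz : ∀ z : G, ∃ q : G × G, (∃ p ∈ P, p.1 * p.2 = z) → q ∈ P ∧ q.1 * q.2 = z := by
      intro z
      by_cases h : ∃ p ∈ P, p.1 * p.2 = z
      · obtain ⟨p, hp, he⟩ := h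
        exact ⟨p, fun _ => ⟨hp, he⟩⟩
      · exact ⟨(1, 1), fun hh => absurd hh h⟩
    choose c hc using hcz
    -- (4) good pairs : translate lands in BK
    have hgoodmem : ∀ p ∈ P, (c (p.1 * p.2)).1⁻¹ * p.1 ∈ BK := by
      rintro ⟨x, y⟩ hp
      have hx : x ∈ S := hp.1.1
      have hy : y ∈ S := hp.1.2
      have hgd : 2 * (ℓ : ℝ) - 4 * a ≤ (wordNorm gen (x * y) : ℝ) := hp.2
      obtain ⟨hcP, hceq⟩ := hc (x * y) ⟨(x, y), hp, rfl⟩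
      set x₀ := (c (x * y)).1 with hx0
      set y₀ := (c (x * y)).2 with hy0
      have hx₀ : x₀ ∈ S := hcP.1.1
      have hy₀ : y₀ ∈ S := hcP.1.2
      have hzy : x₀⁻¹ * (x * y) = y₀ := by rw [← hceq]; group
      have hzx : (x * y)⁻¹ * x = y⁻¹ := by group
      have hx1 := (hSmem x hx).1; have hx2 := (hSmem x hx).2
      have hy1 := (hSmem y hy).1; have hy2 := (hSmem y hy).2
      have hx01 := (hSmem x₀ hx₀).1; have hx02 := (hSmem x₀ hx₀).2
      have hy01 := (hSmem y₀ hy₀).1; have hy02 := (hSmem y₀ hy₀).2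
      have hyinv : (wordNorm gen y⁻¹ : ℝ) = (wordNorm gen y : ℝ) := by
        rw [wordNorm_inv gen hgen]
      have g1 : (2 * (ℓ : ℝ) - 5 * a) / 2 ≤ gromov gen x₀ (x * y) := by
        simp only [gromov, hzy]
        linarith
      have g2 : (2 * (ℓ : ℝ) - 5 * a) / 2 ≤ gromov gen (x * y) x := by
        simp only [gromov, hzx]
        linarith
      have g3 := hhyp x₀ (x * y) x
      have gmin : (2 * (ℓ : ℝ) - 5 * a) / 2 ≤
          min (gromov gen x₀ (x * y)) (gromov gen (x * y) x) := le_min g1 g2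
      have g4 : (2 * (ℓ : ℝ) - 5 * a) / 2 - δ ≤ gromov gen x₀ x := by
        linarith [ge_iff_le.mp g3]
      have hnorm := gromov_norm gen x₀ x
      show (wordNorm gen (x₀⁻¹ * x) : ℝ) ≤ 6 * (a : ℝ) + 2 * δ
      rw [hnorm]
      linarith
    -- (5) P cardinality
    have hPcard : P.ncard ≤ BT.ncard * BK.ncard := by
      have := Set.ncard_le_ncard_of_injOn
        (fun p : G × G => (p.1 * p.2, (c (p.1 * p.2)).1⁻¹ * p.1))
        (by
          rintro ⟨x, y⟩ hp
          refine Set.mk_mem_prod ?_ (hgoodmem _ hp)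
          have hx2 := (hSmem _ hp.1.1).2
          have hy2 := (hSmem _ hp.1.2).2
          have hmul : (wordNorm gen (x * y) : ℝ) ≤
              (wordNorm gen x : ℝ) + (wordNorm gen y : ℝ) := by
            exact_mod_cast wordNorm_mul_le gen hgen x y
          show (wordNorm gen (x * y) : ℝ) ≤ 2 * (ℓ : ℝ)
          linarith)
        (by
          rintro ⟨x, y⟩ _ ⟨x', y'⟩ _ heq
          obtain ⟨h1, h2⟩ := Prod.mk.injEq .. ▸ heq
          rw [h1] at h2
          have hx : x = x' := mul_left_cancel h2
          subst hx
          exact Prod.ext rfl (mul_left_cancel h1))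
        (hBTfin.prod hBKfin)
      rwa [ncard_sprod] at this
    -- (6) splitting S ×ˢ S
    have hs2 : (S ×ˢ S).ncard ≤ P.ncard + Bad.ncard := by
      have hcover : S ×ˢ S = P ∪ Bad :=
        (Set.union_diff_cancel (Set.sep_subset _ _)).symm
      rw [hcover]
      exact Set.ncard_union_le _ _
    -- (7) lower bound for S
    have h5 : Bl.ncard ≤ S.ncard + Bd.ncard := by
      have hsub : Bl ⊆ S ∪ Bd := by
        intro x hx
        by_cases h : x ∈ ball gen ((ℓ : ℝ) - a)
        · exact Or.inr (ball_mono gen (by linarith) h)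
        · exact Or.inl ⟨hx, h⟩
      exact le_trans (Set.ncard_le_ncard hsub (hSfin.union hBdfin)) (Set.ncard_union_le _ _)
    -- combine in ℕ then cast
    have hnat : S.ncard * S.ncard ≤ BT.ncard * BK.ncard + S.ncard * Bd.ncard := by
      have h4 : (S ×ˢ S).ncard = S.ncard * S.ncard := ncard_sprod S S
      omega
    have hreal1 : (S.ncard : ℝ) * (S.ncard : ℝ) ≤
        (BT.ncard : ℝ) * (BK.ncard : ℝ) + (S.ncard : ℝ) * (Bd.ncard : ℝ) := by
      exact_mod_cast hnat
    have hreal2 : (Bl.ncard : ℝ) ≤ (S.ncard : ℝ) + (Bd.ncard : ℝ) := by exact_mod_cast h5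
    have hD0 : (0 : ℝ) ≤ (Bd.ncard : ℝ) := Nat.cast_nonneg _
    have h6 : ((Bl.ncard : ℝ) - 2 * (Bd.ncard : ℝ)) * ((Bl.ncard : ℝ) - 2 * (Bd.ncard : ℝ)) ≤
        (S.ncard : ℝ) * ((S.ncard : ℝ) - (Bd.ncard : ℝ)) :=
      mul_le_mul (by linarith) (by linarith) hB2D (Nat.cast_nonneg _)
    calc ((Bl.ncard : ℝ) - 2 * (Bd.ncard : ℝ)) ^ 2
        = ((Bl.ncard : ℝ) - 2 * (Bd.ncard : ℝ)) * ((Bl.ncard : ℝ) - 2 * (Bd.ncard : ℝ)) := sq _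
      _ ≤ (BT.ncard : ℝ) * (BK.ncard : ℝ) := by nlinarith [h6, hreal1]

end GrowthRQ
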